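/- For every upper expectation tree Q̄, every situation s, and every pointwise nondecreasing sequence (f_n) of bounded-below global variables f_n: Ω → ℝ̄ with pointwise limit f = sup_n f_n, one has lim_{n→∞} Ē_Q̄(f_n|s) = Ē_Q̄(f|s). -/

import Mathlib

open Filter MeasureTheory Topology
open scoped ENNReal

namespace UEPaper

variable {X : Type} [Fintype X] [Nonempty X] [DecidableEq X]

/-- The set of paths: infinite sequences of states (`ω i` is the `(i+1)`-th state). -/
abbrev Path (X : Type) := ℕ → X

/-- The prefix `ω^k` of length `k` of a path, as a list (a situation). -/
def prefixList (ω : Path X) (k : ℕ) : List X := (List.range k).map ω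

/-- The cylinder event `Γ(s)` of a situation `s`. -/
def cyl (s : List X) : Set (Path X) := {ω | prefixList ω s.length = s}

/-- `f` is `n`-measurable: it depends only on the first `n` states. -/
def NMeas (n : ℕ) (f : Path X → EReal) : Prop :=
  ∀ ω ω' : Path X, prefixList ω n = prefixList ω' n → f ω = f ω'

/-- A gamble: a bounded real-valued global variable. -/
def IsGamble (f : Path X → EReal) : Prop :=
  ∃ B : ℝ, ∀ ω, -(B : EReal) ≤ f ω ∧ f ω ≤ (B : EReal)

/-- A finitary gamble: an `n`-measurable gamble for some `n`. -/
def IsFinGamble (f : Path X → EReal) : Prop :=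
  (∃ n, NMeas n f) ∧ IsGamble f

/-- An upper expectation tree: a coherent upper expectation at each situation. -/
structure UpperExpTree (X : Type) [Fintype X] [Nonempty X] where
  Q : List X → (X → ℝ) → ℝ
  le_sup : ∀ (s : List X) (f : X → ℝ), Q s f ≤ ⨆ x, f x
  subadd : ∀ (s : List X) (f g : X → ℝ), Q s (f + g) ≤ Q s f + Q s g
  pos_homog : ∀ (s : List X) (l : ℝ) (f : X → ℝ), 0 ≤ l → Q s (l • f) = l * Q s f

/-- A (real-valued) supermartingale for the upper expectation tree `Q`. -/
def IsSupermart (Q : UpperExpTree X) (M : List X → ℝ) : Prop :=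
  ∀ s : List X, Q.Q s (fun x => M (s ++ [x])) ≤ M s

/-- The game-theoretic upper expectation of a real-valued variable (used on gambles):
the infimum of `M s` over bounded-below supermartingales `M` with
`liminf_k M(ω^k) ≥ f(ω)` on `Γ(s)`. -/
noncomputable def gtG (Q : UpperExpTree X) (f : Path X → ℝ) (s : List X) : EReal :=
  sInf {a : EReal | ∃ M : List X → ℝ, IsSupermart Q M ∧ (∃ B : ℝ, ∀ t, B ≤ M t) ∧
    (∀ ω ∈ cyl s,
      (f ω : EReal) ≤ Filter.liminf (fun k => ((M (prefixList ω k) : ℝ) : EReal)) atTop) ∧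
    a = ((M s : ℝ) : EReal)}

/-- Extension to bounded-below variables, by continuity w.r.t. upper cuts:
`Ē(f|s) = lim_{c → +∞} Ē(min(f,c)|s)` (the limit of this nondecreasing net is a supremum). -/
noncomputable def gtBB (Q : UpperExpTree X) (f : Path X → EReal) (s : List X) : EReal :=
  ⨆ c : ℝ, gtG Q (fun ω => (f ω ⊓ (c : EReal)).toReal) s

/-- The game-theoretic global upper expectation `Ē_Q̄`, extended to all extended
real variables by continuity w.r.t. lower cuts:
`Ē(f|s) = lim_{c → −∞} Ē(max(f,c)|s)` (the limit of this nonincreasing net is an infimum). -/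
noncomputable def gtUE (Q : UpperExpTree X) (f : Path X → EReal) (s : List X) : EReal :=
  ⨅ c : ℝ, gtBB Q (fun ω => f ω ⊔ (c : EReal)) s

/-- A precise probability tree: a probability mass function at each situation. -/
structure PreciseTree (X : Type) [Fintype X] where
  p : List X → X → ℝ
  nonneg : ∀ (s : List X) (x : X), 0 ≤ p s x
  sum_one : ∀ s : List X, ∑ x, p s x = 1

/-- An imprecise probability tree: a nonempty closed convex set of probability mass
functions at each situation. -/
structure ImpreciseTree (X : Type) [Fintype X] where
  sets : List X → Set (X → ℝ)
  nonempty' : ∀ s : List X, (sets s).Nonempty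
  closed' : ∀ s : List X, IsClosed (sets s)
  convex' : ∀ s : List X, Convex ℝ (sets s)
  prob' : ∀ s : List X, ∀ q ∈ sets s, (∀ x, 0 ≤ q x) ∧ ∑ x, q x = 1

/-- `p ∼ 𝒫`: the precise tree `p` is compatible with the imprecise tree `P`. -/
def Compatible (p : PreciseTree X) (P : ImpreciseTree X) : Prop :=
  ∀ s : List X, p.p s ∈ P.sets s

/-- The probability `P_p(Γ(z)|s)` of the cylinder of `z` conditional on situation `s`. -/
noncomputable def cylProb (p : List X → X → ℝ) (s z : List X) : ℝ :=
  if s.length < z.length ∧ z.take s.length = s then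
    ∏ i ∈ Finset.Ico s.length z.length, p (z.take i) (z.getD i (Classical.arbitrary X))
  else if z.length ≤ s.length ∧ s.take z.length = z then 1 else 0

/-- The σ-algebra `ℱ` on paths generated by the cylinder events. -/
instance cylSigma : MeasurableSpace (Path X) :=
  MeasurableSpace.generateFrom {A | ∃ s : List X, A = cyl s}

/-- `μ` is the probability measure `P_p(·|s)` on `ℱ` determined by the tree `p`. -/
def IsTreeMeasure (p : PreciseTree X) (s : List X) (μ : Measure (Path X)) : Prop :=
  IsProbabilityMeasure μ ∧ ∀ z : List X, μ (cyl z) = ENNReal.ofReal (cylProb p.p s z)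

/-- Positive part of an extended real, in `ℝ≥0∞`. -/
noncomputable def posPart (x : EReal) : ℝ≥0∞ := if x = ⊤ then ⊤ else ENNReal.ofReal x.toReal

/-- The Lebesgue integral `∫ g dμ = ∫ g⁺ dμ − ∫ g⁻ dμ` of an extended-real variable
(well-defined, with value in `(-∞, +∞]`, for bounded-below measurable `g`). -/
noncomputable def integralE (μ : Measure (Path X)) (g : Path X → EReal) : EReal :=
  ((∫⁻ ω, posPart (g ω) ∂μ : ℝ≥0∞) : EReal) - ((∫⁻ ω, posPart (-(g ω)) ∂μ : ℝ≥0∞) : EReal)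

/-- The upper integral `Ē_p(f|s)`: infimum of integrals of bounded-below
`ℱ`-measurable variables dominating `f`. -/
noncomputable def upperInt (μ : Measure (Path X)) (f : Path X → EReal) : EReal :=
  sInf {a : EReal | ∃ g : Path X → EReal, Measurable g ∧ (∃ B : ℝ, ∀ ω, (B : EReal) ≤ g ω) ∧
    (∀ ω, f ω ≤ g ω) ∧ a = integralE μ g}

/-- The measure-theoretic global upper expectation `Ē_𝒫(f|s)`, given the assignment
`Pm` of the measures `P_p(·|s)` to precise trees: the upper envelope of the upper
integrals over all compatible precise trees. -/
noncomputable def muUE (Pm : PreciseTree X → List X → Measure (Path X))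
    (P : ImpreciseTree X) (f : Path X → EReal) (s : List X) : EReal :=
  ⨆ (p : PreciseTree X) (_ : Compatible p P), upperInt (Pm p s) f

/-- The trees `P` and `Q` agree: each `Q̄_s` is the upper envelope of the expectations
corresponding to the credal set `𝒫_s`. -/
def Agree (P : ImpreciseTree X) (Q : UpperExpTree X) : Prop :=
  ∀ (s : List X) (f : X → ℝ),
    Q.Q s f = sSup {r : ℝ | ∃ q ∈ P.sets s, r = ∑ x, f x * q x}

/-- Axioms P1–P5 for a global upper expectation `E` w.r.t. the tree `Q`. -/
structure Axioms (Q : UpperExpTree X) (E : (Path X → EReal) → List X → EReal) : Prop where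
  p1 : ∀ (f : X → ℝ) (s : List X),
    E (fun ω => ((f (ω s.length) : ℝ) : EReal)) s = ((Q.Q s f : ℝ) : EReal)
  p2 : ∀ f : Path X → EReal, IsFinGamble f → ∀ s : List X, E f s = E ((cyl s).indicator f) s
  p3 : ∀ f : Path X → EReal, IsFinGamble f → ∀ s : List X,
    E f s ≤ E (fun ω => E f (prefixList ω (s.length + 1))) s
  p4 : ∀ f g : Path X → EReal, (∀ ω, f ω ≤ g ω) → ∀ s : List X, E f s ≤ E g s
  p5 : ∀ (s : List X) (fn : ℕ → Path X → EReal) (f : Path X → EReal),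
    (∀ n, IsFinGamble (fn n)) → (∃ B : ℝ, ∀ n ω, (B : EReal) ≤ fn n ω) →
    (∀ ω, Tendsto (fun n => fn n ω) atTop (nhds (f ω))) →
    E f s ≤ limsup (fun n => E (fn n) s) atTop

/-- Upper semicontinuity of an extended-real variable on the path space. -/
def USC [TopologicalSpace X] [DiscreteTopology X] (f : Path X → EReal) : Prop :=
  ∀ a : ℝ, IsOpen {ω : Path X | f ω < (a : EReal)}

/-- An `Ω`-capacity (Dellacherie): a monotone `[0,∞]`-valued functional on nonnegative
variables, continuous along nondecreasing sequences, and continuous along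
nonincreasing sequences of nonnegative real-valued upper semicontinuous functions. -/
def IsCapacity [TopologicalSpace X] [DiscreteTopology X]
    (F : (Path X → EReal) → EReal) : Prop :=
  (∀ f : Path X → EReal, (∀ ω, 0 ≤ f ω) → 0 ≤ F f) ∧
  (∀ f g : Path X → EReal, (∀ ω, 0 ≤ f ω) → (∀ ω, 0 ≤ g ω) → (∀ ω, f ω ≤ g ω) → F f ≤ F g) ∧
  (∀ fn : ℕ → Path X → EReal, (∀ n ω, 0 ≤ fn n ω) → Monotone fn →
    Tendsto (fun n => F (fn n)) atTop (nhds (F (fun ω => ⨆ n, fn n ω)))) ∧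
  (∀ fn : ℕ → Path X → EReal, (∀ n ω, 0 ≤ fn n ω ∧ fn n ω < ⊤) → (∀ n, USC (fn n)) →
    Antitone fn →
    Tendsto (fun n => F (fn n)) atTop (nhds (F (fun ω => ⨅ n, fn n ω))))

open Classical in
/-- The metric `δ(ω,ω') = 2^{-n}`, `n` the first (1-based) index where `ω` and `ω'` differ. -/
noncomputable def delta (ω ω' : Path X) : ℝ :=
  if h : ω = ω' then 0
  else (1 / 2 : ℝ) ^ (Nat.find (Function.ne_iff.mp h) + 1)

/-- The product topology on the path space (with `X` discrete). -/
def prodTop (X : Type) : TopologicalSpace (ℕ → X) :=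
  @Pi.topologicalSpace ℕ (fun _ => X) (fun _ => ⊥)

set_option linter.unusedSectionVars false

section Basic
variable {X : Type} [Fintype X] [Nonempty X] [DecidableEq X]
variable (Q : UpperExpTree X)

lemma Q_zero (s : List X) : Q.Q s 0 = 0 := by
  have h := Q.pos_homog s 0 0 le_rfl
  simpa using h

lemma Q_le_const (s : List X) (c : ℝ) : Q.Q s (fun _ => c) ≤ c := by
  have h := Q.le_sup s (fun _ => c)
  simpa [ciSup_const] using h

lemma Q_mono (s : List X) {f g : X → ℝ} (h : ∀ x, f x ≤ g x) : Q.Q s f ≤ Q.Q s g := by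
  have h1 : Q.Q s (g + (f - g)) ≤ Q.Q s g + Q.Q s (f - g) := Q.subadd s g (f - g)
  have h2 : g + (f - g) = f := by ring
  have h3 : Q.Q s (f - g) ≤ 0 := by
    refine (Q.le_sup s (f - g)).trans ?_
    exact ciSup_le fun x => by simpa using h x
  rw [h2] at h1; linarith

lemma Q_const (s : List X) (c : ℝ) : Q.Q s (fun _ => c) = c := by
  refine le_antisymm (Q_le_const Q s c) ?_
  have h1 : Q.Q s ((fun _ => c) + (fun _ => -c)) ≤ Q.Q s (fun _ => c) + Q.Q s (fun _ => -c) :=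
    Q.subadd s _ _
  have h2 : ((fun (_ : X) => c) + (fun _ => -c)) = 0 := by funext x; simp
  have h3 : Q.Q s (fun _ => -c) ≤ -c := Q_le_const Q s (-c)
  rw [h2, Q_zero] at h1; linarith

lemma Q_add_const (s : List X) (f : X → ℝ) (c : ℝ) :
    Q.Q s (fun x => f x + c) = Q.Q s f + c := by
  refine le_antisymm ?_ ?_
  · have h1 : Q.Q s (f + (fun _ => c)) ≤ Q.Q s f + Q.Q s (fun _ => c) := Q.subadd s _ _
    rw [Q_const] at h1; exact h1
  · have h1 : Q.Q s ((fun x => f x + c) + (fun _ => -c)) ≤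
        Q.Q s (fun x => f x + c) + Q.Q s (fun _ => -c) := Q.subadd s _ _
    have h2 : ((fun x => f x + c) + (fun _ => -c)) = f := by funext x; simp
    have h3 : Q.Q s (fun _ => -c) ≤ -c := Q_le_const Q s (-c)
    rw [h2] at h1; linarith

lemma const_le_Q (s : List X) {f : X → ℝ} {c : ℝ} (h : ∀ x, c ≤ f x) : c ≤ Q.Q s f := by
  have := Q_mono Q s (f := fun _ => c) (g := f) h
  rwa [Q_const] at this

lemma Q_add_le (s : List X) (f g : X → ℝ) :
    Q.Q s (fun x => f x + g x) ≤ Q.Q s f + Q.Q s g := Q.subadd s f g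

lemma Q_smul (s : List X) (f : X → ℝ) {c : ℝ} (hc : 0 ≤ c) :
    Q.Q s (fun x => c * f x) = c * Q.Q s f := by
  have := Q.pos_homog s c f hc
  exact this

lemma Q_sum_le (s : List X) (I : Finset ℕ) (f : ℕ → X → ℝ) :
    Q.Q s (fun x => ∑ i ∈ I, f i x) ≤ ∑ i ∈ I, Q.Q s (f i) := by
  classical
  induction I using Finset.induction_on with
  | empty => simpa using Q_le_const Q s 0
  | insert a I' hnot ih =>
      have h1 : Q.Q s (fun x => f a x + ∑ i ∈ I', f i x) ≤
          Q.Q s (f a) + Q.Q s (fun x => ∑ i ∈ I', f i x) := Q.subadd s _ _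
      simp only [Finset.sum_insert hnot]
      exact h1.trans (by linarith)

lemma IsSupermart.addM {M N : List X → ℝ} (hM : IsSupermart Q M) (hN : IsSupermart Q N) :
    IsSupermart Q (fun t => M t + N t) := fun t =>
  (Q.subadd t _ _).trans (add_le_add (hM t) (hN t))

lemma IsSupermart.constM (c : ℝ) : IsSupermart Q (fun _ => c) := fun t =>
  (Q_le_const Q t c)

lemma IsSupermart.smulM {M : List X → ℝ} {c : ℝ} (hc : 0 ≤ c) (hM : IsSupermart Q M) :
    IsSupermart Q (fun t => c * M t) := fun t => by
  rw [Q_smul Q t _ hc]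
  exact mul_le_mul_of_nonneg_left (hM t) hc

lemma IsSupermart.sub_constM {M : List X → ℝ} (c : ℝ) (hM : IsSupermart Q M) :
    IsSupermart Q (fun t => M t - c) := fun t => by
  have h : Q.Q t (fun x => M (t ++ [x]) + (-c)) = Q.Q t (fun x => M (t ++ [x])) + (-c) :=
    Q_add_const Q t _ _
  simp only [sub_eq_add_neg]
  rw [h]
  exact add_le_add_left (hM t) _

end Basic
section Paths
variable {X : Type} [Fintype X] [Nonempty X] [DecidableEq X]

lemma prefixList_length (ω : Path X) (k : ℕ) : (prefixList ω k).length = k := by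
  simp [prefixList]

lemma prefixList_succ (ω : Path X) (k : ℕ) :
    prefixList ω (k + 1) = prefixList ω k ++ [ω k] := by
  simp [prefixList, List.range_succ]

lemma prefixList_take (ω : Path X) {k m : ℕ} (h : k ≤ m) :
    (prefixList ω m).take k = prefixList ω k := by
  simp [prefixList, ← List.map_take, List.take_range, inf_of_le_left h]

lemma prefixList_prefix (ω : Path X) {k m : ℕ} (h : k ≤ m) :
    prefixList ω k <+: prefixList ω m := by
  rw [List.prefix_iff_eq_take, prefixList_length, prefixList_take ω h]

lemma mem_cyl_self (ω : Path X) (k : ℕ) : ω ∈ cyl (prefixList ω k) := by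
  simp [cyl, prefixList_length]

lemma cyl_mono {s t : List X} (h : s <+: t) : cyl t ⊆ cyl s := by
  intro ω hω
  have ht : prefixList ω t.length = t := hω
  have hlen : s.length ≤ t.length := h.length_le
  have : (prefixList ω t.length).take s.length = t.take s.length := by rw [ht]
  rw [prefixList_take ω hlen] at this
  have hs : t.take s.length = s := (List.prefix_iff_eq_take.mp h).symm
  show prefixList ω s.length = s
  rw [this, hs]

lemma prefix_of_prefix_prefixList {b : List X} {ω : Path X} {k : ℕ}
    (h : b <+: prefixList ω k) : b = prefixList ω b.length := by
  have h1 : b = (prefixList ω k).take b.length := List.prefix_iff_eq_take.mp h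
  have h2 : b.length ≤ k := by
    have := h.length_le; rwa [prefixList_length] at this
  have h3 : (prefixList ω k).take b.length = prefixList ω b.length := prefixList_take ω h2
  rw [h3] at h1; exact h1

/-- iterated extension of a list by a choice function -/
def chain (u : List X) (F : List X → X) : ℕ → List X
  | 0 => u
  | k + 1 => chain u F k ++ [F (chain u F k)]

lemma chain_length (u : List X) (F : List X → X) (k : ℕ) :
    (chain u F k).length = u.length + k := by
  induction k with
  | zero => rfl
  | succ k ih => simp [chain, ih]; omega

/-- the path following `u` then the choice function `F` -/
noncomputable def chainPath (u : List X) (F : List X → X) : Path X := fun i =>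
  if h : i < u.length then u.get ⟨i, h⟩
  else F (chain u F (i - u.length))

lemma chainPath_prefixList (u : List X) (F : List X → X) (k : ℕ) :
    prefixList (chainPath u F) (u.length + k) = chain u F k := by
  induction k with
  | zero =>
      apply List.ext_get
      · simp [prefixList_length, chain]
      · intro i h1 h2
        have hi : i < u.length := by simpa [chain] using h2
        simp [prefixList, chainPath, hi, List.get_eq_getElem, chain]
  | succ k ih =>
      have : u.length + (k + 1) = (u.length + k) + 1 := by omega
      rw [this, prefixList_succ, ih, chain]
      congr 1
      have h1 : ¬ (u.length + k < u.length) := by omega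
      simp [chainPath, h1]

lemma chainPath_mem_cyl (u : List X) (F : List X → X) : chainPath u F ∈ cyl u := by
  have := chainPath_prefixList u F 0
  simpa [chain, cyl] using this

end Paths
section Witness
variable {X : Type} [Fintype X] [Nonempty X] [DecidableEq X]
variable (Q : UpperExpTree X)

/-- witness predicate matching the set in `gtG` -/
def Witness (f : Path X → ℝ) (s : List X) (M : List X → ℝ) : Prop :=
  IsSupermart Q M ∧ (∃ B : ℝ, ∀ t, B ≤ M t) ∧
    (∀ ω ∈ cyl s,
      (f ω : EReal) ≤ Filter.liminf (fun k => ((M (prefixList ω k) : ℝ) : EReal)) atTop)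

lemma gtG_eq (f : Path X → ℝ) (s : List X) :
    gtG Q f s = sInf {a : EReal | ∃ M, Witness Q f s M ∧ a = ((M s : ℝ) : EReal)} := by
  unfold gtG Witness
  congr 1
  ext a
  constructor
  · rintro ⟨M, h1, h2, h3, h4⟩; exact ⟨M, ⟨h1, h2, h3⟩, h4⟩
  · rintro ⟨M, ⟨h1, h2, h3⟩, h4⟩; exact ⟨M, h1, h2, h3, h4⟩

lemma gtG_le_witness {f : Path X → ℝ} {s : List X} {M : List X → ℝ}
    (h : Witness Q f s M) : gtG Q f s ≤ ((M s : ℝ) : EReal) := by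
  rw [gtG_eq]
  exact sInf_le ⟨M, h, rfl⟩

lemma witness_const {f : Path X → ℝ} {s : List X} {C : ℝ}
    (h : ∀ ω ∈ cyl s, f ω ≤ C) : Witness Q f s (fun _ => C) := by
  refine ⟨IsSupermart.constM Q C, ⟨C, fun _ => le_rfl⟩, fun ω hω => ?_⟩
  rw [Filter.liminf_const]
  exact_mod_cast h ω hω

lemma witness_mono {f g : Path X → ℝ} {s : List X} {M : List X → ℝ}
    (hfg : ∀ ω ∈ cyl s, f ω ≤ g ω) (h : Witness Q g s M) : Witness Q f s M :=
  ⟨h.1, h.2.1, fun ω hω => le_trans (by exact_mod_cast hfg ω hω) (h.2.2 ω hω)⟩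

lemma witness_restrict {f : Path X → ℝ} {s t : List X} {M : List X → ℝ}
    (hst : s <+: t) (h : Witness Q f s M) : Witness Q f t M :=
  ⟨h.1, h.2.1, fun ω hω => h.2.2 ω (cyl_mono hst hω)⟩

/-- key "no dip" lemma: a witness stays above the infimum of the target -/
lemma witness_lower {f : Path X → ℝ} {s : List X} {M : List X → ℝ} {A : ℝ}
    (h : Witness Q f s M) (hA : ∀ ω ∈ cyl s, A ≤ f ω) :
    ∀ t, s <+: t → A ≤ M t := by
  intro t hst
  by_contra hlt
  push_neg at hlt
  -- choice of a minimizing child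
  have hmin : ∀ u : List X, ∃ x : X, M (u ++ [x]) ≤ M u := by
    intro u
    obtain ⟨x₀, -, hx₀⟩ := Finset.exists_min_image (Finset.univ : Finset X)
      (fun x => M (u ++ [x])) ⟨Classical.arbitrary X, Finset.mem_univ _⟩
    refine ⟨x₀, ?_⟩
    have h1 : M (u ++ [x₀]) ≤ Q.Q u (fun x => M (u ++ [x])) :=
      const_le_Q Q u (fun x => hx₀ x (Finset.mem_univ x))
    exact h1.trans (h.1 u)
  set F : List X → X := fun u => Classical.choose (hmin u) with hF
  have hFle : ∀ u, M (u ++ [F u]) ≤ M u := fun u => Classical.choose_spec (hmin u)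
  have hchain : ∀ k, M (chain t F k) ≤ M t := by
    intro k
    induction k with
    | zero => exact le_rfl
    | succ k ih => exact (hFle (chain t F k)).trans ih
  set ω := chainPath t F with hω
  have hωt : ω ∈ cyl t := chainPath_mem_cyl t F
  have hωs : ω ∈ cyl s := cyl_mono hst hωt
  have hfreq : ∃ᶠ k in atTop, ((M (prefixList ω k) : ℝ) : EReal) ≤ ((M t : ℝ) : EReal) := by
    apply Filter.frequently_atTop.2
    intro K
    refine ⟨t.length + K, ?_, ?_⟩
    · omega
    · rw [chainPath_prefixList]
      exact_mod_cast hchain _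
  have hliminf := Filter.liminf_le_of_frequently_le' hfreq
  have hle := (h.2.2 ω hωs).trans hliminf
  have hAf : (A : EReal) ≤ (f ω : EReal) := by exact_mod_cast hA ω hωs
  have : (A : EReal) ≤ ((M t : ℝ) : EReal) := hAf.trans hle
  exact absurd (by exact_mod_cast this) (not_le.mpr hlt)

lemma gtG_le_of_le {f : Path X → ℝ} {s : List X} {C : ℝ}
    (h : ∀ ω ∈ cyl s, f ω ≤ C) : gtG Q f s ≤ ((C : ℝ) : EReal) :=
  gtG_le_witness Q (witness_const Q h)

lemma le_gtG {f : Path X → ℝ} {s : List X} {A : ℝ}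
    (hA : ∀ ω ∈ cyl s, A ≤ f ω) : ((A : ℝ) : EReal) ≤ gtG Q f s := by
  rw [gtG_eq]
  apply le_sInf
  rintro a ⟨M, hM, rfl⟩
  exact_mod_cast witness_lower Q hM hA s List.prefix_rfl

lemma gtG_mono {f g : Path X → ℝ} {s : List X}
    (h : ∀ ω ∈ cyl s, f ω ≤ g ω) : gtG Q f s ≤ gtG Q g s := by
  rw [gtG_eq, gtG_eq]
  apply sInf_le_sInf
  rintro a ⟨M, hM, rfl⟩
  exact ⟨M, witness_mono Q h hM, rfl⟩

lemma exists_witness_lt {f : Path X → ℝ} {s : List X} {b : EReal}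
    (h : gtG Q f s < b) : ∃ M, Witness Q f s M ∧ ((M s : ℝ) : EReal) < b := by
  rw [gtG_eq] at h
  obtain ⟨a, ⟨M, hM, rfl⟩, hab⟩ := sInf_lt_iff.mp h
  exact ⟨M, hM, hab⟩

end Witness
section Machine
open scoped Classical

/-- state of the trading machine: waiting with cash `c`, or holding a witness
bought at node `b` with residual cash `c` -/
inductive MState (X : Type) where
  | wait (c : ℝ)
  | hold (c : ℝ) (b : List X)

variable {X : Type} [Fintype X] [Nonempty X] [DecidableEq X]
variable (Q : UpperExpTree X)
variable (eh : List X → ℝ) (W : List X → List X → ℝ) (r η : ℝ)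

/-- transition of the machine from a node to its children -/
noncomputable def mstep (t : List X) : MState X → MState X
  | .wait c => if eh t < r - η then .hold (c - (eh t + η/4)) t else .wait c
  | .hold c b => if r - η/2 ≤ W b t then .wait (c + W b t) else .hold c b

/-- the machine state at node `u ++ v`, started at `u` -/
noncomputable def mstateSuf (u : List X) (v : List X) : MState X :=
  if h : v = [] then .wait r
  else mstep eh W r η (u ++ v.dropLast) (mstateSuf u v.dropLast)
termination_by v.length
decreasing_by
  simp only [List.length_dropLast]
  have : v.length ≠ 0 := fun hh => h (List.length_eq_zero_iff.mp hh)
  omega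

lemma mstateSuf_nil (u : List X) : mstateSuf eh W r η u [] = .wait r := by
  rw [mstateSuf]; simp

lemma mstateSuf_snoc (u v : List X) (x : X) :
    mstateSuf eh W r η u (v ++ [x]) = mstep eh W r η (u ++ v) (mstateSuf eh W r η u v) := by
  rw [mstateSuf]
  simp [List.dropLast_concat]

/-- the machine's capital at node `t` -/
noncomputable def mval (u t : List X) : ℝ :=
  if u <+: t then
    match mstateSuf eh W r η u (t.drop u.length) with
    | .wait c => c
    | .hold c b => c + W b t
  else r

lemma mval_self (u : List X) : mval eh W r η u u = r := by
  unfold mval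
  rw [if_pos List.prefix_rfl, List.drop_length, mstateSuf_nil]

lemma mstateSuf_child {u t : List X} (hut : u <+: t) (x : X) :
    mstateSuf eh W r η u ((t ++ [x]).drop u.length) =
      mstep eh W r η t (mstateSuf eh W r η u (t.drop u.length)) := by
  have hlen : u.length ≤ t.length := hut.length_le
  rw [List.drop_append_of_le_length hlen, mstateSuf_snoc]
  congr 1
  exact List.prefix_iff_eq_append.mp hut

lemma mval_child {u t : List X} (hut : u <+: t) (x : X) :
    mval eh W r η u (t ++ [x]) =
      (match mstep eh W r η t (mstateSuf eh W r η u (t.drop u.length)) with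
      | .wait c => c
      | .hold c b => c + W b (t ++ [x])) := by
  unfold mval
  rw [if_pos (hut.trans (t.prefix_append [x])), mstateSuf_child eh W r η hut x]

lemma mval_eq_wait {u t : List X} {c : ℝ} (hut : u <+: t)
    (h : mstateSuf eh W r η u (t.drop u.length) = .wait c) :
    mval eh W r η u t = c := by
  unfold mval
  rw [if_pos hut, h]

lemma mval_eq_hold {u t : List X} {c : ℝ} {b : List X} (hut : u <+: t)
    (h : mstateSuf eh W r η u (t.drop u.length) = .hold c b) :
    mval eh W r η u t = c + W b t := by
  unfold mval
  rw [if_pos hut, h]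

variable {eh W r η}
variable (hr : 0 < r) (hη : 0 < η)
variable (hW_super : ∀ b, IsSupermart Q (W b))
variable (hW_price : ∀ t, eh t < r - η → W t t ≤ eh t + η/4)
variable (hW_pos : ∀ b t, b <+: t → 0 ≤ W b t)

include hr hη hW_super hW_price in
lemma mval_supermart (u : List X) : IsSupermart Q (mval eh W r η u) := by
  intro t
  by_cases hut : u <+: t
  · cases hst : mstateSuf eh W r η u (t.drop u.length) with
    | wait c =>
        by_cases hdip : eh t < r - η
        · have hval : ∀ x : X, mval eh W r η u (t ++ [x]) =
              W t (t ++ [x]) + (c - (eh t + η/4)) := by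
            intro x
            rw [mval_child _ _ _ _ hut x, hst]
            simp only [mstep, if_pos hdip]
            ring
          have h1 : Q.Q t (fun x => mval eh W r η u (t ++ [x])) =
              Q.Q t (fun x => W t (t ++ [x]) + (c - (eh t + η/4))) := by
            congr 1; funext x; exact hval x
          rw [mval_eq_wait eh W r η hut hst, h1, Q_add_const]
          have h2 := hW_super t t
          have h3 := hW_price t hdip
          linarith
        · have hval : ∀ x : X, mval eh W r η u (t ++ [x]) = c := by
            intro x
            rw [mval_child _ _ _ _ hut x, hst]
            simp only [mstep, if_neg hdip]
          have h1 : Q.Q t (fun x => mval eh W r η u (t ++ [x])) = c := by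
            rw [show (fun x => mval eh W r η u (t ++ [x])) = (fun _ : X => c) from
              funext hval, Q_const]
          rw [mval_eq_wait eh W r η hut hst, h1]
    | hold c b =>
        by_cases hsell : r - η/2 ≤ W b t
        · have hval : ∀ x : X, mval eh W r η u (t ++ [x]) = c + W b t := by
            intro x
            rw [mval_child _ _ _ _ hut x, hst]
            simp only [mstep, if_pos hsell]
          have h1 : Q.Q t (fun x => mval eh W r η u (t ++ [x])) = c + W b t := by
            rw [show (fun x => mval eh W r η u (t ++ [x])) = (fun _ : X => c + W b t) from
              funext hval, Q_const]
          rw [mval_eq_hold eh W r η hut hst, h1]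
        · have hval : ∀ x : X, mval eh W r η u (t ++ [x]) = W b (t ++ [x]) + c := by
            intro x
            rw [mval_child _ _ _ _ hut x, hst]
            simp only [mstep, if_neg hsell]
            ring
          have h1 : Q.Q t (fun x => mval eh W r η u (t ++ [x])) =
              Q.Q t (fun x => W b (t ++ [x]) + c) := by
            congr 1; funext x; exact hval x
          rw [mval_eq_hold eh W r η hut hst, h1, Q_add_const]
          have h2 := hW_super b t
          linarith
  · -- outside the subtree: all children have value r
    have hval : ∀ x : X, mval eh W r η u (t ++ [x]) = r := by
      intro x
      by_cases hx : u <+: t ++ [x]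
      · have : u = t ++ [x] := by
          rcases Nat.lt_or_ge u.length (t ++ [x]).length with hlt | hge
          · exfalso
            apply hut
            have hlen : u.length ≤ t.length := by
              simpa using Nat.lt_succ_iff.mp (by simpa using hlt)
            have h1 : u = (t ++ [x]).take u.length := List.prefix_iff_eq_take.mp hx
            rw [List.take_append_of_le_length hlen] at h1
            rw [List.prefix_iff_eq_take]
            exact h1
          · have h1 : u.length = (t ++ [x]).length :=
              le_antisymm hx.length_le hge
            have h2 := List.prefix_iff_eq_take.mp hx
            rw [h1, List.take_length] at h2
            exact h2
        rw [← this, mval_self]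
      · unfold mval; rw [if_neg hx]
    have h1 : Q.Q t (fun x => mval eh W r η u (t ++ [x])) = r := by
      rw [show (fun x => mval eh W r η u (t ++ [x])) = (fun _ : X => r) from
        funext hval, Q_const]
    rw [h1]
    unfold mval
    rw [if_neg hut]

/-- invariant of machine states -/
def MInv (t : List X) : MState X → Prop
  | .wait c => r ≤ c
  | .hold c b => 3*η/4 ≤ c ∧ b <+: t

include hη in
lemma minv_step {t : List X} {σ : MState X} (h : MInv (r := r) (η := η) t σ) (x : X) :
    MInv (r := r) (η := η) (t ++ [x]) (mstep eh W r η t σ) := by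
  cases σ with
  | wait c =>
      by_cases hdip : eh t < r - η
      · simp only [mstep, if_pos hdip, MInv]
        constructor
        · have : r ≤ c := h
          linarith
        · exact t.prefix_append [x]
      · simpa only [mstep, if_neg hdip, MInv] using h
  | hold c b =>
      obtain ⟨hc, hb⟩ := h
      by_cases hsell : r - η/2 ≤ W b t
      · simp only [mstep, if_pos hsell, MInv]
        linarith
      · simp only [mstep, if_neg hsell, MInv]
        exact ⟨hc, hb.trans (t.prefix_append [x])⟩

include hη in
lemma minv_all (u : List X) (v : List X) :
    MInv (r := r) (η := η) (u ++ v) (mstateSuf eh W r η u v) := by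
  induction v using List.reverseRecOn with
  | nil => rw [mstateSuf_nil]; exact le_rfl
  | append_singleton v x ih =>
      rw [mstateSuf_snoc, ← List.append_assoc]
      exact minv_step hη ih x

include hr hη hW_pos in
lemma mval_nonneg (u t : List X) : 0 ≤ mval eh W r η u t := by
  by_cases hut : u <+: t
  · have hinv := minv_all (eh := eh) (W := W) (r := r) hη u (t.drop u.length)
    rw [List.prefix_iff_eq_append.mp hut] at hinv
    cases hst : mstateSuf eh W r η u (t.drop u.length) with
    | wait c =>
        rw [hst] at hinv
        have : r ≤ c := hinv
        rw [mval_eq_wait eh W r η hut hst]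
        linarith
    | hold c b =>
        rw [hst] at hinv
        obtain ⟨hc, hb⟩ := hinv
        have := hW_pos b t hb
        rw [mval_eq_hold eh W r η hut hst]
        linarith
  · unfold mval; rw [if_neg hut]; linarith

include hr hη hW_pos in
lemma mval_tendsto (u : List X) (ω : Path X) (hu : ω ∈ cyl u)
    (Hdip : ∀ K, ∃ k ≥ K, eh (prefixList ω k) < r - η)
    (Hsell : ∀ m K, ∃ k ≥ K, r - η/2 ≤ W (prefixList ω m) (prefixList ω k)) :
    Tendsto (fun k => mval eh W r η u (prefixList ω k)) atTop atTop := by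
  have hu' : prefixList ω u.length = u := hu
  have hpre : ∀ m, u <+: prefixList ω (u.length + m) := fun m => by
    conv_lhs => rw [← hu']
    exact prefixList_prefix ω (by omega)
  set σ : ℕ → MState X :=
    fun m => mstateSuf eh W r η u ((prefixList ω (u.length + m)).drop u.length) with hσ
  have hσ0 : σ 0 = .wait r := by
    simp only [hσ, Nat.add_zero, hu', List.drop_length, mstateSuf_nil]
  have hσsucc : ∀ m, σ (m+1) = mstep eh W r η (prefixList ω (u.length + m)) (σ m) := by
    intro m
    have h1 : u.length + (m+1) = (u.length + m) + 1 := by omega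
    simp only [hσ, h1, prefixList_succ]
    exact mstateSuf_child eh W r η (hpre m) _
  have hinv : ∀ m, MInv (r := r) (η := η) (prefixList ω (u.length+m)) (σ m) := by
    intro m
    have h2 := minv_all (eh := eh) (W := W) (r := r) hη u ((prefixList ω (u.length + m)).drop u.length)
    rw [← List.prefix_iff_eq_append.mp (hpre m)]
    exact h2
  set φ : MState X → ℝ :=
    fun σ => match σ with | .wait c => c | .hold c _ => c + (r - 3*η/4) with hφ
  have hstep_mono : ∀ m, φ (σ m) ≤ φ (σ (m+1)) := by
    intro m
    rw [hσsucc m]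
    cases hs : σ m with
    | wait c =>
        by_cases hdip : eh (prefixList ω (u.length + m)) < r - η
        · simp only [mstep, if_pos hdip, hφ]
          linarith
        · simp only [mstep, if_neg hdip, hφ]
          exact le_rfl
    | hold c b =>
        by_cases hsell : r - η/2 ≤ W b (prefixList ω (u.length + m))
        · simp only [mstep, if_pos hsell, hφ]
          linarith
        · simp only [mstep, if_neg hsell, hφ]
          exact le_rfl
  have hφmono : ∀ {m m'}, m ≤ m' → φ (σ m) ≤ φ (σ m') := by
    intro m m' h
    exact monotone_nat_of_le_succ hstep_mono h
  have hsell_inc : ∀ m c b, σ m = .hold c b →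
      r - η/2 ≤ W b (prefixList ω (u.length+m)) → φ (σ m) + η/4 ≤ φ (σ (m+1)) := by
    intro m c b hs hW
    rw [hσsucc m, hs]
    simp only [mstep, if_pos hW, hφ]
    linarith
  have hold_reach : ∀ d m c b, σ m = .hold c b →
      r - η/2 ≤ W b (prefixList ω (u.length + m + d)) →
      ∃ m' ≥ m, ∃ c' b', σ m' = .hold c' b' ∧
        r - η/2 ≤ W b' (prefixList ω (u.length + m')) := by
    intro d
    induction d with
    | zero =>
        intro m c b hs hW
        exact ⟨m, le_rfl, c, b, hs, by simpa using hW⟩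
    | succ d ih =>
        intro m c b hs hW
        by_cases hsell : r - η/2 ≤ W b (prefixList ω (u.length + m))
        · exact ⟨m, le_rfl, c, b, hs, hsell⟩
        · have hnext : σ (m+1) = .hold c b := by
            rw [hσsucc m, hs]
            simp only [mstep, if_neg hsell]
          obtain ⟨m', hm', rest⟩ := ih (m+1) c b hnext
            (by rw [show u.length+(m+1)+d = u.length+m+(d+1) by omega]; exact hW)
          exact ⟨m', by omega, rest⟩
  have wait_reach : ∀ d m c, σ m = .wait c →
      eh (prefixList ω (u.length + m + d)) < r - η →
      ∃ m' ≥ m, ∃ c' b', σ m' = .hold c' b' := by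
    intro d
    induction d with
    | zero =>
        intro m c hs hdip
        refine ⟨m+1, by omega, ?_⟩
        rw [hσsucc m, hs]
        simp only [mstep, if_pos (by simpa using hdip)]
        exact ⟨_, _, rfl⟩
    | succ d ih =>
        intro m c hs hdip
        by_cases hd : eh (prefixList ω (u.length + m)) < r - η
        · refine ⟨m+1, by omega, ?_⟩
          rw [hσsucc m, hs]
          simp only [mstep, if_pos hd]
          exact ⟨_, _, rfl⟩
        · have hnext : σ (m+1) = .wait c := by
            rw [hσsucc m, hs]
            simp only [mstep, if_neg hd]
          obtain ⟨m', hm', rest⟩ := ih (m+1) c hnext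
            (by rw [show u.length+(m+1)+d = u.length+m+(d+1) by omega]; exact hdip)
          exact ⟨m', by omega, rest⟩
  have hinc : ∀ m, ∃ m' > m, φ (σ m) + η/4 ≤ φ (σ m') := by
    intro m
    have hhold : ∃ m₁ ≥ m, ∃ c b, σ m₁ = MState.hold c b := by
      cases hs : σ m with
      | hold c b => exact ⟨m, le_rfl, c, b, hs⟩
      | wait c =>
          obtain ⟨k, hk, hdip⟩ := Hdip (u.length + m)
          obtain ⟨m', hm', c', b', hs'⟩ := wait_reach (k - (u.length+m)) m c hs
            (by rw [show u.length+m+(k-(u.length+m)) = k by omega]; exact hdip)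
          exact ⟨m', hm', c', b', hs'⟩
    obtain ⟨m₁, hm₁, c, b, hs₁⟩ := hhold
    have hbpre : b = prefixList ω b.length := by
      have hI := hinv m₁
      rw [hs₁] at hI
      exact prefix_of_prefix_prefixList hI.2
    obtain ⟨k, hk, hW⟩ := Hsell b.length (u.length + m₁)
    rw [← hbpre] at hW
    obtain ⟨m₂, hm₂, c₂, b₂, hs₂, hW₂⟩ := hold_reach (k - (u.length + m₁)) m₁ c b hs₁
      (by rw [show u.length+m₁+(k-(u.length+m₁)) = k by omega]; exact hW)
    refine ⟨m₂ + 1, by omega, ?_⟩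
    have h1 : φ (σ m) ≤ φ (σ m₂) := hφmono (le_trans hm₁ hm₂)
    have h2 := hsell_inc m₂ c₂ b₂ hs₂ hW₂
    linarith
  have hunb : ∀ j : ℕ, ∃ m, r + j * (η/4) ≤ φ (σ m) := by
    intro j
    induction j with
    | zero => exact ⟨0, by rw [hσ0]; simp [hφ]⟩
    | succ j ih =>
        obtain ⟨m, hm⟩ := ih
        obtain ⟨m', _, hinc'⟩ := hinc m
        refine ⟨m', ?_⟩
        push_cast
        linarith
  have hφt : Tendsto (fun m => φ (σ m)) atTop atTop := by
    rw [tendsto_atTop]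
    intro b
    obtain ⟨j, hj⟩ := exists_nat_ge ((b - r) / (η/4))
    obtain ⟨m₀, hm₀⟩ := hunb j
    have h4 : (0:ℝ) < η/4 := by linarith
    have hbm : b ≤ φ (σ m₀) := by
      have := (div_le_iff₀ h4).mp hj
      linarith
    filter_upwards [eventually_ge_atTop m₀] with m hm
    exact hbm.trans (hφmono hm)
  have hvalφ : ∀ m, φ (σ m) - r ≤ mval eh W r η u (prefixList ω (u.length + m)) := by
    intro m
    cases hs : σ m with
    | wait c =>
        rw [mval_eq_wait eh W r η (hpre m) (by rw [hσ] at hs; exact hs)]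
        simp only [hφ]
        linarith
    | hold c b =>
        have hI := hinv m
        rw [hs] at hI
        rw [mval_eq_hold eh W r η (hpre m) (by rw [hσ] at hs; exact hs)]
        have := hW_pos b _ hI.2
        simp only [hφ]
        linarith
  have hfin : Tendsto (fun m => mval eh W r η u (prefixList ω (u.length + m))) atTop atTop := by
    apply tendsto_atTop_mono hvalφ
    exact tendsto_atTop_add_const_right atTop (-r) hφt |>.congr (fun m => by ring_nf)
  rw [tendsto_atTop]
  intro b
  obtain ⟨M₀, hM₀⟩ := eventually_atTop.mp ((tendsto_atTop.mp hfin) b)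
  filter_upwards [eventually_ge_atTop (u.length + M₀)] with k hk
  have h2 := hM₀ (k - u.length) (by omega)
  rwa [show u.length + (k - u.length) = k by omega] at h2

end Machine
section Core
variable {X : Type} [Fintype X] [Nonempty X] [DecidableEq X]

/-- Core monotone convergence lemma for `gtG` on uniformly bounded sequences. -/
theorem gtG_iSup_le (Q : UpperExpTree X) (g : ℕ → Path X → ℝ) (G : Path X → ℝ) (A C : ℝ)
    (hbdd : ∀ n ω, A ≤ g n ω ∧ g n ω ≤ C)
    (hgmono : ∀ ω, Monotone fun n => g n ω)
    (hsup : ∀ ω, (⨆ n, ((g n ω : ℝ) : EReal)) = ((G ω : ℝ) : EReal))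
    (s : List X) :
    gtG Q G s ≤ ⨆ n, gtG Q (g n) s := by
  classical
  have hgleG : ∀ n ω, g n ω ≤ G ω := by
    intro n ω
    have h1 : ((g n ω : ℝ) : EReal) ≤ ((G ω : ℝ) : EReal) := by
      rw [← hsup ω]; exact le_iSup (fun n => ((g n ω : ℝ) : EReal)) n
    exact_mod_cast h1
  have hGbdd : ∀ ω, A ≤ G ω ∧ G ω ≤ C := by
    intro ω
    constructor
    · exact (hbdd 0 ω).1.trans (hgleG 0 ω)
    · have h1 : ((G ω : ℝ) : EReal) ≤ ((C : ℝ) : EReal) := by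
        rw [← hsup ω]
        exact iSup_le fun n => by exact_mod_cast (hbdd n ω).2
      exact_mod_cast h1
  -- the conditional upper expectation process
  set e : ℕ → List X → ℝ := fun n t => (gtG Q (g n) t).toReal with he
  have hgtG_lb : ∀ n t, ((A : ℝ) : EReal) ≤ gtG Q (g n) t :=
    fun n t => le_gtG Q (fun ω _ => (hbdd n ω).1)
  have hgtG_ub : ∀ n t, gtG Q (g n) t ≤ ((C : ℝ) : EReal) :=
    fun n t => gtG_le_of_le Q (fun ω _ => (hbdd n ω).2)
  have hne_bot : ∀ n t, gtG Q (g n) t ≠ ⊥ := by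
    intro n t h
    have := hgtG_lb n t
    rw [h, le_bot_iff] at this
    exact EReal.coe_ne_bot A this
  have hne_top : ∀ n t, gtG Q (g n) t ≠ ⊤ := by
    intro n t h
    have h2 := hgtG_ub n t
    rw [h] at h2
    exact absurd h2 (by simp)
  have he_coe : ∀ n t, ((e n t : ℝ) : EReal) = gtG Q (g n) t :=
    fun n t => EReal.coe_toReal (hne_top n t) (hne_bot n t)
  have he_lb : ∀ n t, A ≤ e n t := by
    intro n t
    have h1 : ((A : ℝ) : EReal) ≤ ((e n t : ℝ) : EReal) := by rw [he_coe]; exact hgtG_lb n t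
    exact_mod_cast h1
  have he_ub : ∀ n t, e n t ≤ C := by
    intro n t
    have h1 : ((e n t : ℝ) : EReal) ≤ ((C : ℝ) : EReal) := by rw [he_coe]; exact hgtG_ub n t
    exact_mod_cast h1
  have he_mono : ∀ t, Monotone fun n => e n t := by
    intro t n m hnm
    have h1 : gtG Q (g n) t ≤ gtG Q (g m) t :=
      gtG_mono Q (fun ω _ => hgmono ω hnm)
    have h2 : ((e n t : ℝ) : EReal) ≤ ((e m t : ℝ) : EReal) := by
      rw [he_coe, he_coe]; exact h1
    exact_mod_cast h2
  have he_super : ∀ n, IsSupermart Q (e n) := by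
    intro n t
    apply le_of_forall_pos_le_add
    intro δ hδ
    have h1 : gtG Q (g n) t < ((e n t + δ : ℝ) : EReal) := by
      rw [← he_coe n t]
      exact_mod_cast lt_add_of_pos_right _ hδ
    obtain ⟨M, hM, hMs⟩ := exists_witness_lt Q h1
    have hMs' : M t ≤ e n t + δ := by exact_mod_cast hMs.le
    have hx : ∀ x, e n (t ++ [x]) ≤ M (t ++ [x]) := by
      intro x
      have hw := witness_restrict Q (t.prefix_append [x]) hM
      have h2 := gtG_le_witness Q hw
      rw [← he_coe] at h2
      exact_mod_cast h2
    calc Q.Q t (fun x => e n (t ++ [x])) ≤ Q.Q t (fun x => M (t ++ [x])) := Q_mono Q t hx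
      _ ≤ M t := hM.1 t
      _ ≤ e n t + δ := hMs'
  -- its monotone limit
  set Einf : List X → ℝ := fun t => ⨆ n, e n t with hEinf
  have hbA : ∀ t, BddAbove (Set.range fun n => e n t) := by
    intro t
    refine ⟨C, ?_⟩
    rintro _ ⟨n, rfl⟩
    exact he_ub n t
  have hEle : ∀ n t, e n t ≤ Einf t := fun n t => le_ciSup (hbA t) n
  have hEinf_ub : ∀ t, Einf t ≤ C := fun t => ciSup_le fun n => he_ub n t
  have hEinf_lb : ∀ t, A ≤ Einf t := fun t => (he_lb 0 t).trans (hEle 0 t)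
  have hEinf_super : IsSupermart Q Einf := by
    intro t
    apply le_of_forall_pos_le_add
    intro δ hδ
    have hch : ∀ x : X, ∃ n, Einf (t ++ [x]) - δ < e n (t ++ [x]) := by
      intro x
      exact exists_lt_of_lt_ciSup (sub_lt_self _ hδ)
    choose nx hnx using hch
    obtain ⟨x₀, -, hx₀⟩ := Finset.exists_max_image (Finset.univ : Finset X) nx
      ⟨Classical.arbitrary X, Finset.mem_univ _⟩
    have hchild : ∀ x, Einf (t ++ [x]) ≤ e (nx x₀) (t ++ [x]) + δ := by
      intro x
      have h1 := hnx x
      have h2 : e (nx x) (t ++ [x]) ≤ e (nx x₀) (t ++ [x]) :=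
        he_mono _ (hx₀ x (Finset.mem_univ x))
      linarith
    calc Q.Q t (fun x => Einf (t ++ [x]))
        ≤ Q.Q t (fun x => e (nx x₀) (t ++ [x]) + δ) := Q_mono Q t hchild
      _ = Q.Q t (fun x => e (nx x₀) (t ++ [x])) + δ := Q_add_const Q t _ δ
      _ ≤ e (nx x₀) t + δ := by linarith [he_super (nx x₀) t]
      _ ≤ Einf t + δ := by linarith [hEle (nx x₀) t]
  -- choice of cheap witnesses at every node
  have hWex : ∀ (n : ℕ) (δ : ℝ) (b : List X), ∃ Wt : List X → ℝ, 0 < δ →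
      Witness Q (g n) b Wt ∧ Wt b ≤ e n b + δ ∧ ∀ t', b <+: t' → A ≤ Wt t' := by
    intro n δ b
    by_cases hδ : 0 < δ
    · have h1 : gtG Q (g n) b < ((e n b + δ : ℝ) : EReal) := by
        rw [← he_coe n b]
        exact_mod_cast lt_add_of_pos_right _ hδ
      obtain ⟨M, hM, hMs⟩ := exists_witness_lt Q h1
      exact ⟨M, fun _ => ⟨hM, by exact_mod_cast hMs.le,
        fun t' ht' => witness_lower Q hM (fun ω _ => (hbdd n ω).1) t' ht'⟩⟩
    · exact ⟨fun _ => 0, fun h => absurd h hδ⟩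
  choose Wch hWch using hWex
  -- it suffices to beat the sup up to any ε
  set S : EReal := ⨆ n, gtG Q (g n) s with hS
  have hSlb : ((A : ℝ) : EReal) ≤ S := by
    rw [hS]
    exact (hgtG_lb 0 s).trans (le_iSup (fun n => gtG Q (g n) s) 0)
  have hSub : S ≤ ((C : ℝ) : EReal) := by
    rw [hS]
    exact iSup_le fun n => hgtG_ub n s
  have hSne_bot : S ≠ ⊥ := by
    intro h
    rw [h, le_bot_iff] at hSlb
    exact EReal.coe_ne_bot A hSlb
  have hSne_top : S ≠ ⊤ := by
    intro h
    rw [h] at hSub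
    exact absurd hSub (by simp)
  have hGlb : ((A : ℝ) : EReal) ≤ gtG Q G s := le_gtG Q (fun ω _ => (hGbdd ω).1)
  have hGub : gtG Q G s ≤ ((C : ℝ) : EReal) := gtG_le_of_le Q (fun ω _ => (hGbdd ω).2)
  have hGne_bot : gtG Q G s ≠ ⊥ := by
    intro h
    rw [h, le_bot_iff] at hGlb
    exact EReal.coe_ne_bot A hGlb
  have hGne_top : gtG Q G s ≠ ⊤ := by
    intro h
    rw [h] at hGub
    exact absurd hGub (by simp)
  suffices hkey : ∀ ε : ℝ, 0 < ε → gtG Q G s ≤ S + (ε : EReal) by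
    have h1 : (gtG Q G s).toReal ≤ S.toReal := by
      apply le_of_forall_pos_le_add
      intro ε hε
      have h2 := hkey ε hε
      have h3 : (S + (ε : EReal)).toReal = S.toReal + ε := by
        rw [EReal.toReal_add hSne_top hSne_bot (EReal.coe_ne_top ε) (EReal.coe_ne_bot ε),
          EReal.toReal_coe]
      calc (gtG Q G s).toReal ≤ (S + (ε : EReal)).toReal :=
            EReal.toReal_le_toReal h2 hGne_bot
              (EReal.add_lt_top hSne_top (EReal.coe_ne_top ε)).ne
        _ = S.toReal + ε := h3
    calc gtG Q G s = (((gtG Q G s).toReal : ℝ) : EReal) :=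
          (EReal.coe_toReal hGne_top hGne_bot).symm
      _ ≤ ((S.toReal : ℝ) : EReal) := by exact_mod_cast h1
      _ = S := EReal.coe_toReal hSne_top hSne_bot
  intro ε hε
  -- enumeration of (index, level, margin) triples
  obtain ⟨π, hπ⟩ := exists_surjective_nat (ℕ × ℚ × ℚ)
  set nj : ℕ → ℕ := fun j => (π j).1 with hnj
  set rj : ℕ → ℝ := fun j => (((π j).2.1 : ℚ) : ℝ) with hrj
  set ηj : ℕ → ℝ := fun j => (((π j).2.2 : ℚ) : ℝ) with hηj
  set dj : ℕ → ℕ := fun j => s.length + j + 1 with hdj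
  set ehj : ℕ → List X → ℝ := fun j t => e (nj j) t - A with hehj
  set Wj : ℕ → List X → List X → ℝ := fun j b t' => Wch (nj j) (ηj j / 4) b t' - A with hWjd
  set Tcomp : ℕ → List X → ℝ := fun j t =>
    if 0 < ηj j ∧ ηj j < rj j then
      (if dj j ≤ t.length then
        (1 / rj j) * mval (ehj j) (Wj j) (rj j) (ηj j) (t.take (dj j)) t
      else 1)
    else 1 with hTcomp
  have hmach : ∀ j, 0 < ηj j ∧ ηj j < rj j →
      (0 < rj j) ∧ (∀ b, IsSupermart Q (Wj j b)) ∧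
      (∀ t, ehj j t < rj j - ηj j → Wj j t t ≤ ehj j t + ηj j / 4) ∧
      (∀ b t', b <+: t' → 0 ≤ Wj j b t') := by
    intro j hv
    have hη4 : 0 < ηj j / 4 := by linarith [hv.1]
    have hW := fun b => hWch (nj j) (ηj j / 4) b hη4
    refine ⟨hv.1.trans hv.2, ?_, ?_, ?_⟩
    · intro b
      exact IsSupermart.sub_constM Q A (hW b).1.1
    · intro t _
      have h1 := (hW t).2.1
      simp only [hWjd, hehj]
      linarith
    · intro b t' hbt
      have h1 := (hW b).2.2 t' hbt
      simp only [hWjd]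
      linarith
  have hTone : ∀ j t, t.length < dj j → Tcomp j t = 1 := by
    intro j t h
    by_cases hv : 0 < ηj j ∧ ηj j < rj j
    · simp only [hTcomp, if_pos hv]
      rw [if_neg (by omega)]
    · simp only [hTcomp, if_neg hv]
  have hTstart : ∀ j t, 0 < ηj j ∧ ηj j < rj j → t.length = dj j → Tcomp j t = 1 := by
    intro j t hv h
    have hr0 : 0 < rj j := hv.1.trans hv.2
    simp only [hTcomp, if_pos hv]
    rw [if_pos (le_of_eq h.symm)]
    have htake : t.take (dj j) = t := by rw [← h, List.take_length]
    rw [htake, mval_self, one_div_mul_cancel (ne_of_gt hr0)]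
  have hTsuper : ∀ j, IsSupermart Q (Tcomp j) := by
    intro j t
    by_cases hv : 0 < ηj j ∧ ηj j < rj j
    · obtain ⟨hr0, hWsup, hWpr, hWpos⟩ := hmach j hv
      have hrinv : (0:ℝ) ≤ 1 / rj j := by positivity
      by_cases hd : dj j ≤ t.length
      · -- main case: inside the machine's subtree
        have htake : ∀ x : X, (t ++ [x]).take (dj j) = t.take (dj j) :=
          fun x => List.take_append_of_le_length hd
        have hch : ∀ x : X, Tcomp j (t ++ [x]) =
            (1 / rj j) * mval (ehj j) (Wj j) (rj j) (ηj j) (t.take (dj j)) (t ++ [x]) := by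
          intro x
          simp only [hTcomp, if_pos hv]
          rw [if_pos (by simp; omega), htake x]
        have hQ : Q.Q t (fun x => Tcomp j (t ++ [x])) =
            (1 / rj j) * Q.Q t (fun x =>
              mval (ehj j) (Wj j) (rj j) (ηj j) (t.take (dj j)) (t ++ [x])) := by
          rw [show (fun x => Tcomp j (t ++ [x])) = (fun x =>
            (1 / rj j) * mval (ehj j) (Wj j) (rj j) (ηj j) (t.take (dj j)) (t ++ [x])) from
            funext hch]
          exact Q_smul Q t _ hrinv
        have hsm := mval_supermart Q hr0 hv.1 hWsup hWpr (t.take (dj j)) t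
        have hval : Tcomp j t = (1 / rj j) *
            mval (ehj j) (Wj j) (rj j) (ηj j) (t.take (dj j)) t := by
          simp only [hTcomp, if_pos hv]
          rw [if_pos hd]
        rw [hQ, hval]
        exact mul_le_mul_of_nonneg_left hsm hrinv
      · -- before the machine starts: everything is 1
        have hch : ∀ x : X, Tcomp j (t ++ [x]) = 1 := by
          intro x
          rcases Nat.lt_or_ge (t ++ [x]).length (dj j) with h1 | h1
          · exact hTone j (t ++ [x]) h1
          · have h2 : (t ++ [x]).length = dj j := by simp at h1 ⊢; omega
            exact hTstart j (t ++ [x]) hv h2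
        rw [show (fun x => Tcomp j (t ++ [x])) = (fun _ : X => (1:ℝ)) from funext hch,
          Q_const, hTone j t (by omega)]
    · -- invalid parameters: constant 1
      have hch : ∀ x : X, Tcomp j (t ++ [x]) = 1 := by
        intro x
        simp only [hTcomp, if_neg hv]
      rw [show (fun x => Tcomp j (t ++ [x])) = (fun _ : X => (1:ℝ)) from funext hch, Q_const]
      simp only [hTcomp, if_neg hv]
      exact le_rfl
  have hTpos : ∀ j t, 0 ≤ Tcomp j t := by
    intro j t
    by_cases hv : 0 < ηj j ∧ ηj j < rj j
    · obtain ⟨hr0, hWsup, hWpr, hWpos⟩ := hmach j hv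
      simp only [hTcomp, if_pos hv]
      by_cases hd : dj j ≤ t.length
      · rw [if_pos hd]
        exact mul_nonneg (by positivity) (mval_nonneg hr0 hv.1 hWpos _ t)
      · rw [if_neg hd]; norm_num
    · simp only [hTcomp, if_neg hv]; norm_num
  -- the weighted mixture
  set w : ℕ → ℝ := fun j => (1/2:ℝ)^(j+1) with hw
  have hw_pos : ∀ j, 0 < w j := fun j => by rw [hw]; positivity
  have hgeo : ∀ N, ∑ j ∈ Finset.range N, w j = 1 - (1/2:ℝ)^N := by
    intro N
    induction N with
    | zero => simp
    | succ N ih =>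
        rw [Finset.sum_range_succ, ih]
        simp only [hw]
        ring
  set Tsum : List X → ℝ := fun t => 1 + ∑ j ∈ Finset.range t.length, w j * (Tcomp j t - 1)
    with hTsumd
  have hsum_split : ∀ (t : List X) (N : ℕ), ∑ j ∈ Finset.range N, w j * (Tcomp j t - 1)
      = (∑ j ∈ Finset.range N, w j * Tcomp j t) - ∑ j ∈ Finset.range N, w j := by
    intro t N
    rw [← Finset.sum_sub_distrib]
    apply Finset.sum_congr rfl
    intros; ring
  have hTsum_eq : ∀ (t : List X) (J : ℕ), t.length ≤ J →
      Tsum t = 1 + ∑ j ∈ Finset.range J, w j * (Tcomp j t - 1) := by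
    intro t J hJ
    simp only [hTsumd]
    congr 1
    apply Finset.sum_subset (Finset.range_subset_range.mpr hJ)
    intro j _ hjn
    rw [Finset.mem_range, not_lt] at hjn
    rw [hTone j t (by simp only [hdj]; omega)]
    ring
  have hTsum_super : IsSupermart Q Tsum := by
    intro t
    have hchild : ∀ x : X, Tsum (t ++ [x]) =
        (∑ j ∈ Finset.range (t.length + 1), w j * Tcomp j (t ++ [x])) +
          (1 - ∑ j ∈ Finset.range (t.length + 1), w j) := by
      intro x
      have h1 : (t ++ [x]).length = t.length + 1 := by simp
      simp only [hTsumd, h1]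
      rw [hsum_split]
      ring
    calc Q.Q t (fun x => Tsum (t ++ [x]))
        = Q.Q t (fun x => (∑ j ∈ Finset.range (t.length + 1), w j * Tcomp j (t ++ [x])) +
            (1 - ∑ j ∈ Finset.range (t.length + 1), w j)) := by
          congr 1; funext x; exact hchild x
      _ = Q.Q t (fun x => ∑ j ∈ Finset.range (t.length + 1), w j * Tcomp j (t ++ [x])) +
            (1 - ∑ j ∈ Finset.range (t.length + 1), w j) := Q_add_const Q t _ _
      _ ≤ (∑ j ∈ Finset.range (t.length + 1), Q.Q t (fun x => w j * Tcomp j (t ++ [x]))) +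
            (1 - ∑ j ∈ Finset.range (t.length + 1), w j) := by
          have h2 := Q_sum_le Q t (Finset.range (t.length + 1))
            (fun j x => w j * Tcomp j (t ++ [x]))
          linarith
      _ ≤ (∑ j ∈ Finset.range (t.length + 1), w j * Tcomp j t) +
            (1 - ∑ j ∈ Finset.range (t.length + 1), w j) := by
          apply add_le_add_left
          apply Finset.sum_le_sum
          intro j _
          rw [Q_smul Q t _ (hw_pos j).le]
          exact mul_le_mul_of_nonneg_left (hTsuper j t) (hw_pos j).le
      _ = Tsum t := by
          rw [hTsum_eq t (t.length + 1) (by omega), hsum_split]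
          ring
  have hTsum_nonneg : ∀ t, 0 ≤ Tsum t := by
    intro t
    have h1 : Tsum t = (1 - ∑ j ∈ Finset.range t.length, w j) +
        ∑ j ∈ Finset.range t.length, w j * Tcomp j t := by
      simp only [hTsumd, hsum_split]
      ring
    have h2 : (0:ℝ) ≤ ∑ j ∈ Finset.range t.length, w j * Tcomp j t :=
      Finset.sum_nonneg fun j _ => mul_nonneg (hw_pos j).le (hTpos j t)
    have h3 : ∑ j ∈ Finset.range t.length, w j ≤ 1 := by
      rw [hgeo]
      have : (0:ℝ) ≤ (1/2:ℝ)^t.length := by positivity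
      linarith
    linarith
  have hTsum_ge : ∀ j (t : List X), j < t.length → w j * Tcomp j t ≤ Tsum t := by
    intro j t hj
    have h1 : Tsum t = (1 - ∑ i ∈ Finset.range t.length, w i) +
        ∑ i ∈ Finset.range t.length, w i * Tcomp i t := by
      simp only [hTsumd, hsum_split]
      ring
    have h2 : w j * Tcomp j t ≤ ∑ i ∈ Finset.range t.length, w i * Tcomp i t :=
      Finset.single_le_sum (fun i _ => mul_nonneg (hw_pos i).le (hTpos i t))
        (Finset.mem_range.mpr hj)
    have h3 : ∑ i ∈ Finset.range t.length, w i ≤ 1 := by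
      rw [hgeo]
      have : (0:ℝ) ≤ (1/2:ℝ)^t.length := by positivity
      linarith
    linarith
  have hTsum_s : Tsum s = 1 := by
    have h1 : ∀ j ∈ Finset.range s.length, w j * (Tcomp j s - 1) = 0 := by
      intro j _
      rw [hTone j s (by simp only [hdj]; omega)]
      ring
    simp only [hTsumd]
    rw [Finset.sum_congr rfl h1]
    simp
  -- the final supermartingale
  set MM : List X → ℝ := fun t => Einf t + ε/2 * Tsum t with hMM
  have hMM_super : IsSupermart Q MM :=
    IsSupermart.addM Q hEinf_super (IsSupermart.smulM Q (by linarith) hTsum_super)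
  have hMM_lb : ∀ t, A ≤ MM t := by
    intro t
    have h1 := hEinf_lb t
    have h2 : 0 ≤ ε/2 * Tsum t := mul_nonneg (by linarith) (hTsum_nonneg t)
    simp only [hMM]
    linarith
  have hMM_wit : Witness Q G s MM := by
    refine ⟨hMM_super, ⟨A, hMM_lb⟩, ?_⟩
    intro ω hω
    by_cases hgood : ∀ n, ((g n ω : ℝ) : EReal) ≤
        liminf (fun k => ((e n (prefixList ω k) : ℝ) : EReal)) atTop
    · -- good path: the limit process already dominates
      have hMge : ∀ n, liminf (fun k => ((e n (prefixList ω k) : ℝ) : EReal)) atTop ≤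
          liminf (fun k => ((MM (prefixList ω k) : ℝ) : EReal)) atTop := by
        intro n
        have hforall : ∀ k, ((e n (prefixList ω k) : ℝ) : EReal) ≤
            ((MM (prefixList ω k) : ℝ) : EReal) := by
          intro k
          have h2 := hEle n (prefixList ω k)
          have h3 : 0 ≤ ε/2 * Tsum (prefixList ω k) :=
            mul_nonneg (by linarith) (hTsum_nonneg (prefixList ω k))
          have h1 : e n (prefixList ω k) ≤ MM (prefixList ω k) := by
            simp only [hMM]; linarith
          exact_mod_cast h1
        exact liminf_le_liminf (Filter.Eventually.of_forall hforall)
      rw [← hsup ω]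
      exact iSup_le fun n => (hgood n).trans (hMge n)
    · -- bad path: some insurance component blows up
      push_neg at hgood
      obtain ⟨n, hbad⟩ := hgood
      set L := liminf (fun k => ((e n (prefixList ω k) : ℝ) : EReal)) atTop with hL
      have hLA : ((A:ℝ):EReal) ≤ L :=
        le_liminf_of_le (h := Filter.Eventually.of_forall fun k => by exact_mod_cast he_lb n _)
      have hLC : L ≤ ((C:ℝ):EReal) :=
        liminf_le_of_frequently_le'
          (Filter.Frequently.of_forall fun k => by exact_mod_cast he_ub n _)
      have hLne_bot : L ≠ ⊥ := by
        intro h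
        rw [h, le_bot_iff] at hLA
        exact EReal.coe_ne_bot A hLA
      have hLne_top : L ≠ ⊤ := by
        intro h
        rw [h] at hLC
        exact absurd hLC (by simp)
      set x := L.toReal with hx
      have hxL : ((x:ℝ):EReal) = L := EReal.coe_toReal hLne_top hLne_bot
      have hxA : A ≤ x := by
        rw [← hxL] at hLA
        exact_mod_cast hLA
      have hxg : x < g n ω := by
        rw [← hxL] at hbad
        exact_mod_cast hbad
      obtain ⟨rq, hrq1, hrq2⟩ := exists_rat_btwn (show x - A < g n ω - A by linarith)
      obtain ⟨ηq, hηq1, hηq2⟩ := exists_rat_btwn (show (0:ℝ) < (rq:ℝ) - (x - A) by linarith)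
      obtain ⟨j, hj⟩ := hπ (n, rq, ηq)
      have hnj' : nj j = n := by simp only [hnj, hj]
      have hrj' : rj j = (rq:ℝ) := by simp only [hrj, hj]
      have hηj' : ηj j = (ηq:ℝ) := by simp only [hηj, hj]
      have hv : 0 < ηj j ∧ ηj j < rj j := by
        rw [hηj', hrj']
        refine ⟨by exact_mod_cast hηq1, by linarith⟩
      obtain ⟨hr0, hWsup, hWpr, hWpos⟩ := hmach j hv
      have hiq1 : x - A < rj j - ηj j := by rw [hrj', hηj']; linarith
      have hiq2 : rj j < g n ω - A := by rw [hrj']; linarith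
      set u := prefixList ω (dj j) with hu
      have hωu : ω ∈ cyl u := by rw [hu]; exact mem_cyl_self ω (dj j)
      have Hdip : ∀ K, ∃ k ≥ K, ehj j (prefixList ω k) < rj j - ηj j := by
        intro K
        have h1 : L < (((rj j - ηj j + A : ℝ)) : EReal) := by
          rw [← hxL]
          exact_mod_cast show x < rj j - ηj j + A by linarith
        have h2 : ∃ᶠ k in atTop,
            ((e n (prefixList ω k) : ℝ) : EReal) < (((rj j - ηj j + A : ℝ)) : EReal) := by
          apply frequently_lt_of_liminf_lt
          · isBoundedDefault
          · exact h1
        obtain ⟨k, hk, hlt⟩ := Filter.frequently_atTop.mp h2 K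
        refine ⟨k, hk, ?_⟩
        have h3 : e n (prefixList ω k) < rj j - ηj j + A := by exact_mod_cast hlt
        simp only [hehj, hnj']
        linarith
      have Hsell : ∀ m K, ∃ k ≥ K, rj j - ηj j / 2 ≤ Wj j (prefixList ω m) (prefixList ω k) := by
        intro m K
        have hη4 : 0 < ηj j / 4 := by linarith [hv.1]
        have hWm := hWch (nj j) (ηj j / 4) (prefixList ω m) hη4
        have hliminf := hWm.1.2.2 ω (mem_cyl_self ω m)
        have hlt : (((rj j + A - ηj j / 2 : ℝ)) : EReal) < liminf (fun k =>
            ((Wch (nj j) (ηj j / 4) (prefixList ω m) (prefixList ω k) : ℝ) : EReal)) atTop := by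
          refine lt_of_lt_of_le ?_ hliminf
          rw [hnj']
          exact_mod_cast show rj j + A - ηj j / 2 < g n ω by linarith [hv.1]
        have hev : ∀ᶠ k in atTop, (((rj j + A - ηj j / 2 : ℝ)) : EReal) <
            ((Wch (nj j) (ηj j / 4) (prefixList ω m) (prefixList ω k) : ℝ) : EReal) := by
          apply eventually_lt_of_lt_liminf hlt
        obtain ⟨k, hk, hgt⟩ := Filter.frequently_atTop.mp hev.frequently K
        refine ⟨k, hk, ?_⟩
        have h3 : rj j + A - ηj j / 2 <
            Wch (nj j) (ηj j / 4) (prefixList ω m) (prefixList ω k) := by exact_mod_cast hgt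
        simp only [hWjd]
        linarith
      have hT := mval_tendsto hr0 hv.1 hWpos u ω hωu Hdip Hsell
      -- eventually the capital exceeds C
      set R : ℝ := (C - A) * (2/ε) * (rj j * (2:ℝ)^(j+1)) with hR
      have hCev : ∀ᶠ k in atTop, C ≤ MM (prefixList ω k) := by
        have htarget : ∀ᶠ k in atTop,
            R ≤ mval (ehj j) (Wj j) (rj j) (ηj j) u (prefixList ω k) :=
          (tendsto_atTop.mp hT) R
        filter_upwards [htarget, eventually_ge_atTop (dj j), eventually_ge_atTop (j+1)]
          with k h1 h2 h3
        have htake : (prefixList ω k).take (dj j) = u := by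
          rw [hu]; exact prefixList_take ω h2
        have hTc : Tcomp j (prefixList ω k) =
            (1/rj j) * mval (ehj j) (Wj j) (rj j) (ηj j) u (prefixList ω k) := by
          simp only [hTcomp, if_pos hv]
          rw [if_pos (by rw [prefixList_length]; exact h2), htake]
        have hge := hTsum_ge j (prefixList ω k) (by rw [prefixList_length]; omega)
        have hkey : w j * ((1/rj j) * R) = (C - A) * (2/ε) := by
          rw [hw, hR]
          field_simp
          have h2j : (1/2:ℝ)^j * 2^j = 1 := by rw [← mul_pow]; norm_num
          linear_combination (C - A) * h2j
        have hm1 : w j * ((1/rj j) * R) ≤ w j * Tcomp j (prefixList ω k) := by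
          rw [hTc]
          apply mul_le_mul_of_nonneg_left _ (hw_pos j).le
          apply mul_le_mul_of_nonneg_left h1 (by positivity)
        have hm2 : (C - A) * (2/ε) ≤ w j * Tcomp j (prefixList ω k) := by
          rw [← hkey]; exact hm1
        have hm3 : ε/2 * ((C - A) * (2/ε)) ≤ ε/2 * (w j * Tcomp j (prefixList ω k)) :=
          mul_le_mul_of_nonneg_left hm2 (by linarith)
        have hm4 : ε/2 * ((C - A) * (2/ε)) = C - A := by
          field_simp
        have hm5 : ε/2 * (w j * Tcomp j (prefixList ω k)) ≤ ε/2 * Tsum (prefixList ω k) :=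
          mul_le_mul_of_nonneg_left hge (by linarith)
        have h6 := hEinf_lb (prefixList ω k)
        simp only [hMM]
        linarith
      have hCev' : ∀ᶠ k in atTop,
          ((C:ℝ):EReal) ≤ ((MM (prefixList ω k) : ℝ) : EReal) := by
        filter_upwards [hCev] with k hk
        exact_mod_cast hk
      have hliminfC : ((C:ℝ):EReal) ≤
          liminf (fun k => ((MM (prefixList ω k) : ℝ) : EReal)) atTop :=
        le_liminf_of_le (h := hCev')
      exact (show ((G ω : ℝ):EReal) ≤ ((C:ℝ):EReal) by exact_mod_cast (hGbdd ω).2).trans hliminfC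
  -- wrap up
  have h1 : gtG Q G s ≤ ((MM s : ℝ) : EReal) := gtG_le_witness Q hMM_wit
  have hMs : MM s = Einf s + ε/2 := by
    simp only [hMM, hTsum_s]
    ring
  obtain ⟨n₀, hn₀⟩ : ∃ n₀, Einf s - ε/2 < e n₀ s :=
    exists_lt_of_lt_ciSup (sub_lt_self _ (by linarith))
  have h2 : MM s ≤ e n₀ s + ε := by rw [hMs]; linarith
  calc gtG Q G s ≤ ((MM s : ℝ) : EReal) := h1
    _ ≤ ((e n₀ s + ε : ℝ) : EReal) := by exact_mod_cast h2
    _ = ((e n₀ s : ℝ) : EReal) + (ε : EReal) := by exact_mod_cast EReal.coe_add _ _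
    _ ≤ S + (ε : EReal) := by
        apply add_le_add_left
        rw [he_coe, hS]
        exact le_iSup (fun n => gtG Q (g n) s) n₀

end Core
section Outer
variable {X : Type} [Fintype X] [Nonempty X] [DecidableEq X]

lemma toReal_bounds {x : EReal} {a b : ℝ} (h1 : (a:EReal) ≤ x) (h2 : x ≤ (b:EReal)) :
    a ≤ x.toReal ∧ x.toReal ≤ b := by
  have hne_bot : x ≠ ⊥ := by
    intro h
    rw [h, le_bot_iff] at h1
    exact EReal.coe_ne_bot a h1
  have hne_top : x ≠ ⊤ := by
    intro h
    rw [h] at h2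
    exact absurd h2 (by simp)
  constructor
  · have := EReal.toReal_le_toReal h1 (EReal.coe_ne_bot a) hne_top
    rwa [EReal.toReal_coe] at this
  · have := EReal.toReal_le_toReal h2 hne_bot (EReal.coe_ne_top b)
    rwa [EReal.toReal_coe] at this

lemma coe_min_le_inf {B c : ℝ} {x : EReal} (h : (B:EReal) ≤ x) :
    ((min B c : ℝ) : EReal) ≤ x ⊓ (c : EReal) := by
  apply le_inf
  · exact le_trans (by exact_mod_cast min_le_left B c) h
  · exact_mod_cast min_le_right B c

lemma gtBB_mono (Q : UpperExpTree X) {h₁ h₂ : Path X → EReal} {B₁ : ℝ} (s : List X)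
    (hB₁ : ∀ ω, (B₁:EReal) ≤ h₁ ω) (hle : ∀ ω, h₁ ω ≤ h₂ ω) :
    gtBB Q h₁ s ≤ gtBB Q h₂ s := by
  apply iSup_mono
  intro c
  apply gtG_mono
  intro ω _
  have hlow : ((min B₁ c : ℝ) : EReal) ≤ h₁ ω ⊓ (c:EReal) := coe_min_le_inf (hB₁ ω)
  have hup : h₂ ω ⊓ (c:EReal) ≤ ((c:ℝ):EReal) := inf_le_right
  exact EReal.toReal_le_toReal (inf_le_inf_right _ (hle ω))
    (fun hh => EReal.coe_ne_bot _ (le_bot_iff.mp (hh ▸ hlow)))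
    (fun hh => absurd (hh ▸ hup) (by simp))

lemma gtUE_eq_gtBB (Q : UpperExpTree X) {h : Path X → EReal} {B : ℝ} (s : List X)
    (hB : ∀ ω, (B:EReal) ≤ h ω) : gtUE Q h s = gtBB Q h s := by
  apply le_antisymm
  · have h1 : gtUE Q h s ≤ gtBB Q (fun ω => h ω ⊔ ((B:ℝ):EReal)) s := iInf_le _ B
    have h2 : (fun ω => h ω ⊔ ((B:ℝ):EReal)) = h := by
      funext ω
      exact sup_eq_left.mpr (hB ω)
    rwa [h2] at h1
  · apply le_iInf
    intro c
    exact gtBB_mono Q s hB (fun ω => le_sup_left)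

lemma gtUE_mono (Q : UpperExpTree X) {h₁ h₂ : Path X → EReal} {B₁ : ℝ} (s : List X)
    (hB₁ : ∀ ω, (B₁:EReal) ≤ h₁ ω) (hle : ∀ ω, h₁ ω ≤ h₂ ω) :
    gtUE Q h₁ s ≤ gtUE Q h₂ s := by
  apply iInf_mono
  intro c
  exact gtBB_mono Q s (fun ω => le_trans (by exact_mod_cast min_le_right B₁ c) le_sup_right)
    (fun ω => sup_le_sup_right (hle ω) _)

lemma iSup_inf_const_EReal (a : ℕ → EReal) (c : EReal) :
    (⨆ n, a n ⊓ c) = (⨆ n, a n) ⊓ c := by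
  apply le_antisymm
  · exact iSup_le fun n => inf_le_inf_right c (le_iSup a n)
  · rcases le_total (⨆ n, a n) c with h | h
    · rw [inf_eq_left.mpr h]
      exact iSup_le fun n => le_iSup_of_le n (le_inf le_rfl ((le_iSup a n).trans h))
    · rw [inf_eq_right.mpr h]
      by_contra hlt
      rw [not_le] at hlt
      have hn : ∀ n, a n ≤ ⨆ m, a m ⊓ c := by
        intro n
        rcases le_or_gt (a n) c with h1 | h1
        · exact le_iSup_of_le n (le_inf le_rfl h1)
        · exfalso
          have h2 : a n ⊓ c = c := inf_eq_right.mpr h1.le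
          have h3 : c ≤ ⨆ m, a m ⊓ c := by
            have h4 := le_iSup (fun m => a m ⊓ c) n
            rwa [h2] at h4
          exact absurd h3 (not_le.mpr hlt)
      exact absurd (h.trans (iSup_le hn)) (not_le.mpr hlt)

end Outer
theorem stmt3 (Q : UpperExpTree X) (s : List X)
    (fn : ℕ → Path X → EReal) (f : Path X → EReal)
    (hmono : Monotone fn)
    (hbb : ∀ n, ∃ B : ℝ, ∀ ω, (B : EReal) ≤ fn n ω)
    (hlim : ∀ ω, f ω = ⨆ n, fn n ω) :
    Tendsto (fun n => gtUE Q (fn n) s) atTop (nhds (gtUE Q f s)) := by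
  obtain ⟨B, hB⟩ := hbb 0
  have hfnB : ∀ n ω, (B:EReal) ≤ fn n ω := fun n ω => (hB ω).trans (hmono (Nat.zero_le n) ω)
  have hfB : ∀ ω, (B:EReal) ≤ f ω := fun ω => (hfnB 0 ω).trans (by
    rw [hlim ω]; exact le_iSup (fun n => fn n ω) 0)
  have hfnle : ∀ n ω, fn n ω ≤ f ω := fun n ω => by
    rw [hlim ω]; exact le_iSup (fun n => fn n ω) n
  have hmonoseq : Monotone fun n => gtUE Q (fn n) s := fun n m hnm =>
    gtUE_mono Q s (hfnB n) (fun ω => hmono hnm ω)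
  have htend := tendsto_atTop_iSup hmonoseq
  suffices hS : (⨆ n, gtUE Q (fn n) s) = gtUE Q f s by rwa [hS] at htend
  apply le_antisymm
  · exact iSup_le fun n => gtUE_mono Q s (hfnB n) (hfnle n)
  · rw [gtUE_eq_gtBB Q s hfB]
    have hrw : ∀ n, gtUE Q (fn n) s = gtBB Q (fn n) s := fun n => gtUE_eq_gtBB Q s (hfnB n)
    rw [iSup_congr hrw]
    show (⨆ c : ℝ, gtG Q (fun ω => (f ω ⊓ (c:EReal)).toReal) s) ≤ ⨆ n, gtBB Q (fn n) s
    apply iSup_le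
    intro c
    have hbounds : ∀ n ω, min B c ≤ (fn n ω ⊓ (c:EReal)).toReal ∧
        (fn n ω ⊓ (c:EReal)).toReal ≤ c :=
      fun n ω => toReal_bounds (coe_min_le_inf (hfnB n ω)) inf_le_right
    have hfinite : ∀ n ω, fn n ω ⊓ (c:EReal) ≠ ⊥ ∧ fn n ω ⊓ (c:EReal) ≠ ⊤ := by
      intro n ω
      constructor
      · intro hh
        have := coe_min_le_inf (c := c) (hfnB n ω)
        rw [hh, le_bot_iff] at this
        exact EReal.coe_ne_bot _ this
      · intro hh
        have : fn n ω ⊓ (c:EReal) ≤ ((c:ℝ):EReal) := inf_le_right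
        rw [hh] at this
        exact absurd this (by simp)
    have hGfinite : ∀ ω, f ω ⊓ (c:EReal) ≠ ⊥ ∧ f ω ⊓ (c:EReal) ≠ ⊤ := by
      intro ω
      constructor
      · intro hh
        have := coe_min_le_inf (c := c) (hfB ω)
        rw [hh, le_bot_iff] at this
        exact EReal.coe_ne_bot _ this
      · intro hh
        have : f ω ⊓ (c:EReal) ≤ ((c:ℝ):EReal) := inf_le_right
        rw [hh] at this
        exact absurd this (by simp)
    have hcore := gtG_iSup_le Q (fun n ω => (fn n ω ⊓ (c:EReal)).toReal)
      (fun ω => (f ω ⊓ (c:EReal)).toReal) (min B c) c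
      (fun n ω => hbounds n ω)
      (fun ω n m hnm => by
        exact EReal.toReal_le_toReal (inf_le_inf_right _ (hmono hnm ω))
          (hfinite n ω).1 (hfinite m ω).2)
      (fun ω => by
        have hcoe : ∀ n, (((fn n ω ⊓ (c:EReal)).toReal : ℝ) : EReal) = fn n ω ⊓ (c:EReal) :=
          fun n => EReal.coe_toReal (hfinite n ω).2 (hfinite n ω).1
        have hcoeG : (((f ω ⊓ (c:EReal)).toReal : ℝ) : EReal) = f ω ⊓ (c:EReal) :=
          EReal.coe_toReal (hGfinite ω).2 (hGfinite ω).1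
        rw [iSup_congr hcoe, hcoeG, iSup_inf_const_EReal, ← hlim ω])
      s
    calc gtG Q (fun ω => (f ω ⊓ (c:EReal)).toReal) s
        ≤ ⨆ n, gtG Q (fun ω => (fn n ω ⊓ (c:EReal)).toReal) s := hcore
      _ ≤ ⨆ n, gtBB Q (fn n) s := by
          apply iSup_mono
          intro n
          exact le_iSup (fun c' : ℝ => gtG Q (fun ω => (fn n ω ⊓ (c':EReal)).toReal) s) c

end UEPaper
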